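/- The group G = ⟨g₁, g₂, g₃, g₄⟩ is the internal semidirect product of H = ⟨g₁, g₂⟩ ≅ Cₙ × Cₙ by K = ⟨g₃, g₄⟩ ≅ C₂ × C₂; in particular G = HK, H is normal in G, and H ∩ K = 1, so |G| = 4n². -/

import Mathlib

abbrev TV (n : ℕ) := ZMod n × ZMod n × Fin 4

def baseRel (n : ℕ) (a b : TV n) : Prop :=
  ∃ j i : ZMod n,
    (a = (j, i, 0) ∧ b = (j, i, 1)) ∨
    (a = (j, i, 0) ∧ b = (j, i, 2)) ∨
    (a = (j, i, 0) ∧ b = (j + 1, i, 3)) ∨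
    (a = (j, i, 1) ∧ b = (j, i, 3)) ∨
    (a = (j, i, 1) ∧ b = (j, i + 1, 2)) ∨
    (a = (j, i, 2) ∧ b = (j, i, 3))

def TRC (n : ℕ) : SimpleGraph (TV n) := SimpleGraph.fromRel (baseRel n)

def g1 (n : ℕ) : Equiv.Perm (TV n) :=
  ⟨fun p => (p.1, p.2.1 - 1, p.2.2), fun p => (p.1, p.2.1 + 1, p.2.2),
   fun p => by simp, fun p => by simp⟩

def g2 (n : ℕ) : Equiv.Perm (TV n) :=
  ⟨fun p => (p.1 + 1, p.2.1, p.2.2), fun p => (p.1 - 1, p.2.1, p.2.2),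
   fun p => by simp, fun p => by simp⟩

def sig : Fin 4 → Fin 4 := ![1, 0, 3, 2]

def g3 (n : ℕ) : Equiv.Perm (TV n) :=
  Function.Involutive.toPerm (fun p => (p.2.1, p.1, sig p.2.2))
    (by rintro ⟨a, b, c⟩; simp only [Prod.mk.injEq]; refine ⟨trivial, trivial, ?_⟩; fin_cases c <;> rfl)

def tau : Fin 4 → Fin 4 := ![3, 2, 1, 0]

def g4 (n : ℕ) : Equiv.Perm (TV n) :=
  Function.Involutive.toPerm (fun p => (1 - p.1, 1 - p.2.1, tau p.2.2))
    (by rintro ⟨a, b, c⟩; simp only [Prod.mk.injEq, sub_sub_cancel]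
        refine ⟨trivial, trivial, ?_⟩; fin_cases c <;> rfl)

set_option linter.unnecessarySeqFocus false

def psi (n : ℕ) (a b : ZMod n) : Equiv.Perm (TV n) :=
  ⟨fun p => (p.1 + b, p.2.1 - a, p.2.2), fun p => (p.1 - b, p.2.1 + a, p.2.2),
   fun p => by simp, fun p => by simp⟩

@[simp] lemma psi_apply (n : ℕ) (a b : ZMod n) (p : TV n) :
    psi n a b p = (p.1 + b, p.2.1 - a, p.2.2) := rfl

@[simp] lemma g1_apply (n : ℕ) (p : TV n) : g1 n p = (p.1, p.2.1 - 1, p.2.2) := rfl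
@[simp] lemma g2_apply (n : ℕ) (p : TV n) : g2 n p = (p.1 + 1, p.2.1, p.2.2) := rfl
@[simp] lemma g3_apply (n : ℕ) (p : TV n) : g3 n p = (p.2.1, p.1, sig p.2.2) := rfl
@[simp] lemma g4_apply (n : ℕ) (p : TV n) : g4 n p = (1 - p.1, 1 - p.2.1, tau p.2.2) := rfl

lemma psi_mul (n : ℕ) (a b c d : ZMod n) :
    psi n a b * psi n c d = psi n (a + c) (b + d) := by
  ext p <;> simp [psi, Equiv.Perm.mul_apply] <;> ring

lemma psi_zero (n : ℕ) : psi n 0 0 = 1 := by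
  ext p <;> simp [psi]

lemma g1_eq (n : ℕ) : g1 n = psi n 1 0 := by ext p <;> simp [psi, g1]
lemma g2_eq (n : ℕ) : g2 n = psi n 0 1 := by ext p <;> simp [psi, g2]

lemma g1_pow (n : ℕ) (k : ℕ) : g1 n ^ k = psi n k 0 := by
  induction k with
  | zero => simpa using (psi_zero n).symm
  | succ k ih => rw [pow_succ, ih, g1_eq, psi_mul]; push_cast; ring_nf

lemma g2_pow (n : ℕ) (k : ℕ) : g2 n ^ k = psi n 0 k := by
  induction k with
  | zero => simpa using (psi_zero n).symm
  | succ k ih => rw [pow_succ, ih, g2_eq, psi_mul]; push_cast; ring_nf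

lemma g3_mul_psi (n : ℕ) (a b : ZMod n) :
    g3 n * psi n a b = psi n (-b) (-a) * g3 n := by
  ext p <;> simp [Equiv.Perm.mul_apply] <;> ring

lemma g4_mul_psi (n : ℕ) (a b : ZMod n) :
    g4 n * psi n a b = psi n (-a) (-b) * g4 n := by
  ext p <;> simp [Equiv.Perm.mul_apply] <;> ring

lemma g3_sq (n : ℕ) : g3 n * g3 n = 1 := by
  ext ⟨a, b, c⟩ <;> simp [Equiv.Perm.mul_apply] ; fin_cases c <;> rfl

lemma g4_sq (n : ℕ) : g4 n * g4 n = 1 := by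
  ext ⟨a, b, c⟩ <;> simp [Equiv.Perm.mul_apply] ; fin_cases c <;> rfl

lemma g3_g4_comm (n : ℕ) : g3 n * g4 n = g4 n * g3 n := by
  ext ⟨a, b, c⟩ <;> simp [Equiv.Perm.mul_apply] ; fin_cases c <;> rfl

def kappa (n : ℕ) (s r : ZMod 2) : Equiv.Perm (TV n) := g3 n ^ s.val * g4 n ^ r.val

lemma kappa_zero (n : ℕ) : kappa n 0 0 = 1 := by simp [kappa]

lemma g3_pow_mod (n : ℕ) (k : ℕ) : g3 n ^ k = g3 n ^ (k % 2) := by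
  conv_lhs => rw [← Nat.div_add_mod k 2]
  rw [pow_add, pow_mul, show g3 n ^ 2 = 1 by rw [sq, g3_sq], one_pow, one_mul]

lemma g4_pow_mod (n : ℕ) (k : ℕ) : g4 n ^ k = g4 n ^ (k % 2) := by
  conv_lhs => rw [← Nat.div_add_mod k 2]
  rw [pow_add, pow_mul, show g4 n ^ 2 = 1 by rw [sq, g4_sq], one_pow, one_mul]

lemma kappa_mul (n : ℕ) (s r s' r' : ZMod 2) :
    kappa n s r * kappa n s' r' = kappa n (s + s') (r + r') := by
  have c34 : Commute (g3 n) (g4 n) := g3_g4_comm n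
  rw [kappa, kappa, kappa, ((c34.pow_pow s'.val r.val).symm).mul_mul_mul_comm,
    ← pow_add, ← pow_add, ZMod.val_add, ZMod.val_add, ← g3_pow_mod, ← g4_pow_mod]

lemma kappa_sq (n : ℕ) (s r : ZMod 2) : kappa n s r * kappa n s r = 1 := by
  rw [kappa_mul, CharTwo.add_self_eq_zero s,
    CharTwo.add_self_eq_zero r, kappa_zero]

lemma kappa_inv (n : ℕ) (s r : ZMod 2) : (kappa n s r)⁻¹ = kappa n s r :=
  inv_eq_of_mul_eq_one_right (kappa_sq n s r)

lemma kappa_mul_psi (n : ℕ) (s r : ZMod 2) (a b : ZMod n) :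
    ∃ a' b', kappa n s r * psi n a b = psi n a' b' * kappa n s r := by
  fin_cases s <;> fin_cases r
  · exact ⟨a, b, by
      show g3 n ^ (0:ZMod 2).val * g4 n ^ (0:ZMod 2).val * psi n a b =
        psi n a b * (g3 n ^ (0:ZMod 2).val * g4 n ^ (0:ZMod 2).val)
      simp⟩
  · refine ⟨-a, -b, ?_⟩
    show g3 n ^ (0:ZMod 2).val * g4 n ^ (1:ZMod 2).val * psi n a b = _
    simp only [show ((0:ZMod 2)).val = 0 from rfl, show ((1:ZMod 2)).val = 1 from rfl,
      pow_zero, pow_one, one_mul, g4_mul_psi]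
    rfl
  · refine ⟨-b, -a, ?_⟩
    show g3 n ^ (1:ZMod 2).val * g4 n ^ (0:ZMod 2).val * psi n a b = _
    simp only [show ((0:ZMod 2)).val = 0 from rfl, show ((1:ZMod 2)).val = 1 from rfl,
      pow_zero, pow_one, mul_one, g3_mul_psi]
    rfl
  · refine ⟨b, a, ?_⟩
    show g3 n ^ (1:ZMod 2).val * g4 n ^ (1:ZMod 2).val * psi n a b = _
    simp only [show ((1:ZMod 2)).val = 1 from rfl, pow_one]
    rw [mul_assoc, g4_mul_psi, ← mul_assoc, g3_mul_psi, neg_neg, neg_neg, mul_assoc]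
    rfl

lemma zmod2_cases : ∀ x : ZMod 2, x = 0 ∨ x = 1 := by decide

lemma psi_eq_kappa (n : ℕ) (a b : ZMod n) (s r : ZMod 2)
    (h : psi n a b = kappa n s r) : a = 0 ∧ b = 0 ∧ s = 0 ∧ r = 0 := by
  have hpt := DFunLike.congr_fun h ((0 : ZMod n), (0 : ZMod n), (0 : Fin 4))
  rcases zmod2_cases s with rfl | rfl <;> rcases zmod2_cases r with rfl | rfl <;>
    simp only [kappa, show ((0:ZMod 2)).val = 0 from rfl, show ((1:ZMod 2)).val = 1 from rfl,
      pow_zero, pow_one, one_mul, mul_one, Equiv.Perm.mul_apply, Equiv.Perm.one_apply,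
      psi_apply, g3_apply, g4_apply, sig, tau, Prod.mk.injEq, zero_add, zero_sub,
      neg_eq_zero, Matrix.cons_val_zero, Matrix.cons_val_one, Matrix.head_cons] at hpt <;>
    first
      | exact ⟨hpt.2.1, hpt.1, rfl, rfl⟩
      | simp at hpt

def Psi (n : ℕ) : Multiplicative (ZMod n) × Multiplicative (ZMod n) →* Equiv.Perm (TV n) :=
  MonoidHom.mk' (fun p => psi n p.1.toAdd p.2.toAdd)
    (fun x y => by simp only [psi_mul]; rfl)

def Chi (n : ℕ) : Multiplicative (ZMod 2) × Multiplicative (ZMod 2) →* Equiv.Perm (TV n) :=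
  MonoidHom.mk' (fun p => kappa n p.1.toAdd p.2.toAdd)
    (fun x y => by simp only [kappa_mul]; rfl)

lemma psi_mem_closure (n : ℕ) (a b : ZMod n) [NeZero n] :
    psi n a b ∈ Subgroup.closure {g1 n, g2 n} := by
  have h1 : g1 n ∈ ({g1 n, g2 n} : Set (Equiv.Perm (TV n))) := by simp
  have h2 : g2 n ∈ ({g1 n, g2 n} : Set (Equiv.Perm (TV n))) := by simp
  have : psi n a b = g1 n ^ a.val * g2 n ^ b.val := by
    rw [g1_pow, g2_pow, psi_mul, ZMod.natCast_val, ZMod.natCast_val, ZMod.cast_id, ZMod.cast_id,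
      add_zero, zero_add]
  rw [this]
  exact mul_mem (pow_mem (Subgroup.subset_closure h1) _) (pow_mem (Subgroup.subset_closure h2) _)

lemma hH (n : ℕ) [NeZero n] : Subgroup.closure {g1 n, g2 n} = (Psi n).range := by
  apply le_antisymm
  · rw [Subgroup.closure_le]
    rintro x (rfl | rfl)
    · exact ⟨(Multiplicative.ofAdd 1, Multiplicative.ofAdd 0), (g1_eq n).symm⟩
    · exact ⟨(Multiplicative.ofAdd 0, Multiplicative.ofAdd 1), (g2_eq n).symm⟩
  · rintro x ⟨⟨a, b⟩, rfl⟩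
    exact psi_mem_closure n _ _

lemma kappa_mem_closure (n : ℕ) (s r : ZMod 2) :
    kappa n s r ∈ Subgroup.closure {g3 n, g4 n} := by
  have h3 : g3 n ∈ ({g3 n, g4 n} : Set (Equiv.Perm (TV n))) := by simp
  have h4 : g4 n ∈ ({g3 n, g4 n} : Set (Equiv.Perm (TV n))) := by simp
  exact mul_mem (pow_mem (Subgroup.subset_closure h3) _) (pow_mem (Subgroup.subset_closure h4) _)

lemma hK (n : ℕ) : Subgroup.closure {g3 n, g4 n} = (Chi n).range := by
  apply le_antisymm
  · rw [Subgroup.closure_le]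
    rintro x (rfl | rfl)
    · exact ⟨(Multiplicative.ofAdd 1, Multiplicative.ofAdd 0), by
        show kappa n 1 0 = g3 n
        simp [kappa, show ((0:ZMod 2)).val = 0 from rfl, show ((1:ZMod 2)).val = 1 from rfl]⟩
    · exact ⟨(Multiplicative.ofAdd 0, Multiplicative.ofAdd 1), by
        show kappa n 0 1 = g4 n
        simp [kappa, show ((0:ZMod 2)).val = 0 from rfl, show ((1:ZMod 2)).val = 1 from rfl]⟩
  · rintro x ⟨⟨s, r⟩, rfl⟩
    exact kappa_mem_closure n _ _

def bigF (n : ℕ) : (ZMod n × ZMod n) × (ZMod 2 × ZMod 2) → Equiv.Perm (TV n) :=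
  fun p => psi n p.1.1 p.1.2 * kappa n p.2.1 p.2.2

def bigS (n : ℕ) : Subgroup (Equiv.Perm (TV n)) where
  carrier := Set.range (bigF n)
  one_mem' := ⟨((0, 0), (0, 0)), by simp [bigF, psi_zero, kappa_zero]⟩
  mul_mem' := by
    rintro x y ⟨⟨⟨a, b⟩, ⟨s, r⟩⟩, rfl⟩ ⟨⟨⟨a', b'⟩, ⟨s', r'⟩⟩, rfl⟩
    obtain ⟨a'', b'', hcom⟩ := kappa_mul_psi n s r a' b'
    refine ⟨((a + a'', b + b''), (s + s', r + r')), ?_⟩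
    show psi n (a + a'') (b + b'') * kappa n (s + s') (r + r') =
      psi n a b * kappa n s r * (psi n a' b' * kappa n s' r')
    rw [← psi_mul, ← kappa_mul]
    calc psi n a b * psi n a'' b'' * (kappa n s r * kappa n s' r')
        = psi n a b * ((psi n a'' b'' * kappa n s r) * kappa n s' r') := by
          simp only [mul_assoc]
      _ = psi n a b * ((kappa n s r * psi n a' b') * kappa n s' r') := by rw [← hcom]
      _ = psi n a b * kappa n s r * (psi n a' b' * kappa n s' r') := by
          simp only [mul_assoc]
  inv_mem' := by
    rintro x ⟨⟨⟨a, b⟩, ⟨s, r⟩⟩, rfl⟩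
    obtain ⟨a', b', hcom⟩ := kappa_mul_psi n s r (-a) (-b)
    refine ⟨((a', b'), (s, r)), ?_⟩
    show psi n a' b' * kappa n s r = (psi n a b * kappa n s r)⁻¹
    rw [mul_inv_rev, kappa_inv]
    have hpsiinv : (psi n a b)⁻¹ = psi n (-a) (-b) := by
      apply inv_eq_of_mul_eq_one_right
      rw [psi_mul]; simp [psi_zero]
    rw [hpsiinv, ← hcom]

lemma hG (n : ℕ) [NeZero n] :
    Subgroup.closure {g1 n, g2 n, g3 n, g4 n} = bigS n := by
  apply le_antisymm
  · rw [Subgroup.closure_le]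
    rintro x (rfl | rfl | rfl | rfl)
    · exact ⟨((1, 0), (0, 0)), by show bigF n _ = _; rw [bigF, kappa_zero, mul_one, g1_eq]⟩
    · exact ⟨((0, 1), (0, 0)), by show bigF n _ = _; rw [bigF, kappa_zero, mul_one, g2_eq]⟩
    · refine ⟨((0, 0), (1, 0)), ?_⟩
      show psi n 0 0 * kappa n 1 0 = g3 n
      rw [psi_zero, one_mul, kappa]
      simp [show ((0:ZMod 2)).val = 0 from rfl, show ((1:ZMod 2)).val = 1 from rfl]
    · refine ⟨((0, 0), (0, 1)), ?_⟩
      show psi n 0 0 * kappa n 0 1 = g4 n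
      rw [psi_zero, one_mul, kappa]
      simp [show ((0:ZMod 2)).val = 0 from rfl, show ((1:ZMod 2)).val = 1 from rfl]
  · rintro x ⟨⟨⟨a, b⟩, ⟨s, r⟩⟩, rfl⟩
    have hsub : ({g1 n, g2 n} : Set (Equiv.Perm (TV n))) ⊆ {g1 n, g2 n, g3 n, g4 n} := by
      intro z hz; rcases hz with rfl | rfl <;> simp
    have hsub2 : ({g3 n, g4 n} : Set (Equiv.Perm (TV n))) ⊆ {g1 n, g2 n, g3 n, g4 n} := by
      intro z hz; rcases hz with rfl | rfl <;> simp
    exact mul_mem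
      ((Subgroup.closure_mono hsub) (psi_mem_closure n a b))
      ((Subgroup.closure_mono hsub2) (kappa_mem_closure n s r))

lemma mem_bigS {n : ℕ} {x : Equiv.Perm (TV n)} : x ∈ bigS n ↔ ∃ p, bigF n p = x := Iff.rfl

lemma psi_mem_Psi_range (n : ℕ) (a b : ZMod n) : psi n a b ∈ (Psi n).range :=
  ⟨(Multiplicative.ofAdd a, Multiplicative.ofAdd b), rfl⟩

lemma conj_mem_psi_range (n : ℕ) (a b : ZMod n) (s r : ZMod 2) (c d : ZMod n) :
    (psi n a b * kappa n s r) * psi n c d * (psi n a b * kappa n s r)⁻¹ ∈ (Psi n).range := by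
  obtain ⟨c', d', hcom⟩ := kappa_mul_psi n s r c d
  have hk : kappa n s r * psi n c d * (kappa n s r)⁻¹ = psi n c' d' := by
    rw [kappa_inv, hcom, mul_assoc, kappa_sq, mul_one]
  have key : (psi n a b * kappa n s r) * psi n c d * (psi n a b * kappa n s r)⁻¹
      = psi n a b * (kappa n s r * psi n c d * (kappa n s r)⁻¹) * (psi n a b)⁻¹ := by
    group
  rw [key, hk]
  exact mul_mem (mul_mem (psi_mem_Psi_range n a b) (psi_mem_Psi_range n c' d'))
    (inv_mem (psi_mem_Psi_range n a b))

lemma zmod2_add_eq_zero : ∀ x y : ZMod 2, x + y = 0 → y = x := by decide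

lemma psi_inj (n : ℕ) {a b c d : ZMod n} (h : psi n a b = psi n c d) : a = c ∧ b = d := by
  have hpt := DFunLike.congr_fun h ((0 : ZMod n), (0 : ZMod n), (0 : Fin 4))
  simp only [psi_apply, Prod.mk.injEq, zero_add, zero_sub, neg_inj] at hpt
  exact ⟨hpt.2.1, hpt.1⟩

lemma bigF_inj (n : ℕ) : Function.Injective (bigF n) := by
  rintro ⟨⟨a, b⟩, ⟨s, r⟩⟩ ⟨⟨a', b'⟩, ⟨s', r'⟩⟩ h
  have key : psi n (a - a') (b - b') = kappa n (s' + s) (r' + r) := by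
    calc psi n (a - a')  (b - b')
        = psi n (-a') (-b') * (psi n a b * kappa n s r) * kappa n s r := by
          rw [mul_assoc, mul_assoc, kappa_sq, mul_one, psi_mul, neg_add_eq_sub, neg_add_eq_sub]
      _ = psi n (-a') (-b') * (psi n a' b' * kappa n s' r') * kappa n s r := by
          rw [show psi n a b * kappa n s r = psi n a' b' * kappa n s' r' from h]
      _ = kappa n (s' + s) (r' + r) := by
          rw [← mul_assoc, psi_mul, neg_add_cancel, neg_add_cancel, psi_zero, one_mul, kappa_mul]
  obtain ⟨h1, h2, h3, h4⟩ := psi_eq_kappa n _ _ _ _ key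
  have ha : a = a' := by rwa [sub_eq_zero] at h1
  have hb : b = b' := by rwa [sub_eq_zero] at h2
  have hs : s = s' := zmod2_add_eq_zero _ _ h3
  have hr : r = r' := zmod2_add_eq_zero _ _ h4
  simp [ha, hb, hs, hr]

/-- G = H ⋊ K: G = HK, H ⊴ G, H ∩ K = 1, H ≅ Cₙ × Cₙ, K ≅ C₂ × C₂, |G| = 4n². -/
theorem G_semidirect (n : ℕ) (hn : 2 ≤ n) :
    ((Subgroup.closure {g1 n, g2 n}).subgroupOf
      (Subgroup.closure {g1 n, g2 n, g3 n, g4 n} : Subgroup (Equiv.Perm (TV n)))).Normal ∧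
    (∀ g ∈ (Subgroup.closure {g1 n, g2 n, g3 n, g4 n} : Subgroup (Equiv.Perm (TV n))),
      ∃ h ∈ Subgroup.closure {g1 n, g2 n}, ∃ k ∈ Subgroup.closure {g3 n, g4 n}, g = h * k) ∧
    (Subgroup.closure {g1 n, g2 n} : Subgroup (Equiv.Perm (TV n))) ⊓
      Subgroup.closure {g3 n, g4 n} = ⊥ ∧
    Nonempty ((Subgroup.closure {g1 n, g2 n} : Subgroup (Equiv.Perm (TV n))) ≃*
      Multiplicative (ZMod n) × Multiplicative (ZMod n)) ∧
    Nonempty ((Subgroup.closure {g3 n, g4 n} : Subgroup (Equiv.Perm (TV n))) ≃*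
      Multiplicative (ZMod 2) × Multiplicative (ZMod 2)) ∧
    Nat.card (Subgroup.closure {g1 n, g2 n, g3 n, g4 n} : Subgroup (Equiv.Perm (TV n)))
      = 4 * n ^ 2 := by
  haveI : NeZero n := ⟨by omega⟩
  refine ⟨?_, ?_, ?_, ?_, ?_, ?_⟩
  · -- Normal
    refine ⟨?_⟩
    intro x hx g
    rw [Subgroup.mem_subgroupOf] at hx ⊢
    simp only [Subgroup.coe_mul, Subgroup.coe_inv]
    have hg : (g : Equiv.Perm (TV n)) ∈ bigS n := by rw [← hG n]; exact g.2
    obtain ⟨⟨⟨a, b⟩, ⟨s, r⟩⟩, hgf⟩ := mem_bigS.mp hg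
    rw [hH n] at hx ⊢
    obtain ⟨⟨c, d⟩, hx⟩ := hx
    rw [← hgf, ← hx]
    exact conj_mem_psi_range n a b s r _ _
  · -- G = HK
    intro g hg
    rw [hG n] at hg
    obtain ⟨⟨⟨a, b⟩, ⟨s, r⟩⟩, rfl⟩ := mem_bigS.mp hg
    exact ⟨psi n a b, psi_mem_closure n a b, kappa n s r, kappa_mem_closure n s r, rfl⟩
  · -- H ⊓ K = ⊥
    rw [eq_bot_iff]
    intro x hx
    rw [Subgroup.mem_inf, hH n, hK n] at hx
    obtain ⟨⟨⟨a, b⟩, rfl⟩, ⟨⟨s, r⟩, hx⟩⟩ := hx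
    obtain ⟨h1, h2, -, -⟩ := psi_eq_kappa n _ _ _ _ hx.symm
    rw [Subgroup.mem_bot]
    show psi n _ _ = 1
    rw [h1, h2, psi_zero]
  · -- H ≅ Cₙ × Cₙ
    have hinj : Function.Injective (Psi n) := by
      intro x y hxy
      obtain ⟨h1, h2⟩ := psi_inj n (show psi n x.1.toAdd x.2.toAdd
        = psi n y.1.toAdd y.2.toAdd from hxy)
      exact Prod.ext (Multiplicative.toAdd.injective h1) (Multiplicative.toAdd.injective h2)
    rw [hH n]
    exact ⟨(MonoidHom.ofInjective hinj).symm⟩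
  · -- K ≅ C₂ × C₂
    have hinj : Function.Injective (Chi n) := by
      intro x y hxy
      have hxy' : kappa n x.1.toAdd x.2.toAdd = kappa n y.1.toAdd y.2.toAdd := hxy
      have key : psi n 0 0 = kappa n (x.1.toAdd + y.1.toAdd) (x.2.toAdd + y.2.toAdd) := by
        rw [psi_zero, ← kappa_mul, hxy', kappa_sq]
      obtain ⟨-, -, h3, h4⟩ := psi_eq_kappa n _ _ _ _ key
      refine Prod.ext (Multiplicative.toAdd.injective ?_) (Multiplicative.toAdd.injective ?_)
      · exact (zmod2_add_eq_zero _ _ h3).symm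
      · exact (zmod2_add_eq_zero _ _ h4).symm
    rw [hK n]
    exact ⟨(MonoidHom.ofInjective hinj).symm⟩
  · -- |G| = 4n²
    rw [hG n]
    have : Nat.card (bigS n) = Nat.card ((ZMod n × ZMod n) × (ZMod 2 × ZMod 2)) := by
      have : Nat.card (bigS n) = Nat.card (Set.range (bigF n)) := rfl
      rw [this, Nat.card_range_of_injective (bigF_inj n)]
    rw [this, Nat.card_prod, Nat.card_prod, Nat.card_prod, Nat.card_zmod, Nat.card_zmod]
    ring
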